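/- Let G be the presented group ⟨a₁, a₂, a₃, a₄, a₅, a₆ | a₁² = a₂² = a₃² = a₄² = a₅² = a₆³ = a₁a₂a₃a₄a₅a₆ = 1⟩. Then the subgroup of G generated by the four elements a₁a₂, a₁a₃, a₁a₄ and a₁a₅ is equal to the whole group G. -/
import Mathlib


/-- The relators `a₁², a₂², a₃², a₄², a₅², a₆³, a₁a₂a₃a₄a₅a₆` of the presented
group `G = ⟨a₁,…,a₆ | a₁² = a₂² = a₃² = a₄² = a₅² = a₆³ = a₁a₂a₃a₄a₅a₆ = 1⟩`. -/
def exampleRels : Set (FreeGroup (Fin 6)) :=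
  {FreeGroup.of 0 ^ 2, FreeGroup.of 1 ^ 2, FreeGroup.of 2 ^ 2, FreeGroup.of 3 ^ 2,
    FreeGroup.of 4 ^ 2, FreeGroup.of 5 ^ 3,
    FreeGroup.of 0 * FreeGroup.of 1 * FreeGroup.of 2 * FreeGroup.of 3 *
      FreeGroup.of 4 * FreeGroup.of 5}

/-- Any relator becomes `1` in the presented group. -/
lemma exampleRels_one {r : FreeGroup (Fin 6)} (hr : r ∈ exampleRels) :
    PresentedGroup.mk exampleRels r = 1 :=
  (QuotientGroup.eq_one_iff r).mpr (Subgroup.subset_normalClosure hr)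

lemma exampleSq (i : Fin 6) (hmem : FreeGroup.of i ^ 2 ∈ exampleRels) :
    (PresentedGroup.of i : PresentedGroup exampleRels) *
      PresentedGroup.of i = 1 := by
  have := exampleRels_one hmem
  rw [map_pow, pow_two] at this
  exact this

/-- In `G = ⟨a₁,…,a₆ | a₁² = a₂² = a₃² = a₄² = a₅² = a₆³ = a₁a₂a₃a₄a₅a₆ = 1⟩`,
the subgroup generated by `a₁a₂`, `a₁a₃`, `a₁a₄`, `a₁a₅` is all of `G`. -/
theorem exampleSubgroup_eq_top :
    Subgroup.closure
      ({PresentedGroup.of 0 * PresentedGroup.of 1,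
        PresentedGroup.of 0 * PresentedGroup.of 2,
        PresentedGroup.of 0 * PresentedGroup.of 3,
        PresentedGroup.of 0 * PresentedGroup.of 4} :
          Set (PresentedGroup exampleRels)) = ⊤ := by
  set b : Fin 6 → PresentedGroup exampleRels := PresentedGroup.of with hb
  set H : Subgroup (PresentedGroup exampleRels) :=
    Subgroup.closure {b 0 * b 1, b 0 * b 2, b 0 * b 3, b 0 * b 4} with hH
  -- the square relations
  have sq0 : b 0 * b 0 = 1 := exampleSq 0 (Set.mem_insert _ _)
  have sq1 : b 1 * b 1 = 1 := exampleSq 1 (by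
    exact Set.mem_insert_iff.mpr (Or.inr (Set.mem_insert _ _)))
  have sq2 : b 2 * b 2 = 1 := exampleSq 2 (by
    exact Set.mem_insert_iff.mpr (Or.inr (Set.mem_insert_iff.mpr (Or.inr
      (Set.mem_insert _ _)))))
  have sq3 : b 3 * b 3 = 1 := exampleSq 3 (by
    exact Set.mem_insert_iff.mpr (Or.inr (Set.mem_insert_iff.mpr (Or.inr
      (Set.mem_insert_iff.mpr (Or.inr (Set.mem_insert _ _)))))))
  have sq4 : b 4 * b 4 = 1 := exampleSq 4 (by
    exact Set.mem_insert_iff.mpr (Or.inr (Set.mem_insert_iff.mpr (Or.inr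
      (Set.mem_insert_iff.mpr (Or.inr (Set.mem_insert_iff.mpr (Or.inr
        (Set.mem_insert _ _)))))))))
  have inv0 : (b 0)⁻¹ = b 0 := inv_eq_of_mul_eq_one_right sq0
  have inv1 : (b 1)⁻¹ = b 1 := inv_eq_of_mul_eq_one_right sq1
  have inv2 : (b 2)⁻¹ = b 2 := inv_eq_of_mul_eq_one_right sq2
  have inv3 : (b 3)⁻¹ = b 3 := inv_eq_of_mul_eq_one_right sq3
  have inv4 : (b 4)⁻¹ = b 4 := inv_eq_of_mul_eq_one_right sq4
  have cube : b 5 * b 5 * b 5 = 1 := by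
    have hmem : FreeGroup.of (5 : Fin 6) ^ 3 ∈ exampleRels := by
      exact Set.mem_insert_iff.mpr (Or.inr (Set.mem_insert_iff.mpr (Or.inr
        (Set.mem_insert_iff.mpr (Or.inr (Set.mem_insert_iff.mpr (Or.inr
          (Set.mem_insert_iff.mpr (Or.inr (Set.mem_insert _ _))))))))))
    have := exampleRels_one hmem
    rw [map_pow, pow_succ, pow_two] at this
    exact this
  have prod1 : b 0 * b 1 * b 2 * b 3 * b 4 * b 5 = 1 := by
    have hmem : FreeGroup.of (0 : Fin 6) * FreeGroup.of 1 * FreeGroup.of 2 * FreeGroup.of 3 *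
        FreeGroup.of 4 * FreeGroup.of 5 ∈ exampleRels := by
      exact Set.mem_insert_iff.mpr (Or.inr (Set.mem_insert_iff.mpr (Or.inr
        (Set.mem_insert_iff.mpr (Or.inr (Set.mem_insert_iff.mpr (Or.inr
          (Set.mem_insert_iff.mpr (Or.inr (Set.mem_insert_iff.mpr (Or.inr rfl)))))))))))
    have := exampleRels_one hmem
    rw [map_mul, map_mul, map_mul, map_mul, map_mul] at this
    exact this
  -- b5 = (b0b1b2b3b4)⁻¹, hence (b0b1b2b3b4)³ = 1
  have h5 : b 5 = (b 0 * b 1 * b 2 * b 3 * b 4)⁻¹ :=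
    eq_inv_of_mul_eq_one_right prod1
  have c3 : (b 0 * b 1 * b 2 * b 3 * b 4) * (b 0 * b 1 * b 2 * b 3 * b 4) *
      (b 0 * b 1 * b 2 * b 3 * b 4) = 1 := by
    have h := cube
    rw [h5] at h
    calc (b 0 * b 1 * b 2 * b 3 * b 4) * (b 0 * b 1 * b 2 * b 3 * b 4) *
          (b 0 * b 1 * b 2 * b 3 * b 4)
        = ((b 0 * b 1 * b 2 * b 3 * b 4)⁻¹ * (b 0 * b 1 * b 2 * b 3 * b 4)⁻¹ *
            (b 0 * b 1 * b 2 * b 3 * b 4)⁻¹)⁻¹ := by group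
      _ = 1 := by rw [h]; group
  -- generators of the closure
  have g1 : b 0 * b 1 ∈ H := Subgroup.subset_closure (by left; rfl)
  have g2 : b 0 * b 2 ∈ H := Subgroup.subset_closure (by right; left; rfl)
  have g3 : b 0 * b 3 ∈ H := Subgroup.subset_closure (by right; right; left; rfl)
  have g4 : b 0 * b 4 ∈ H := Subgroup.subset_closure (by right; right; right; rfl)
  -- pairs
  have mk_pair : ∀ i j : Fin 6, (b i)⁻¹ = b i → b 0 * b i ∈ H → b 0 * b j ∈ H →
      b i * b j ∈ H := by
    intro i j hinv hi hj
    have : (b 0 * b i)⁻¹ * (b 0 * b j) = b i * b j := by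
      rw [mul_inv_rev, hinv, inv0, mul_assoc, ← mul_assoc (b 0) (b 0) (b j), sq0, one_mul]
    rw [← this]
    exact Subgroup.mul_mem H (Subgroup.inv_mem H hi) hj
  have g0 : b 0 * b 0 ∈ H := by rw [sq0]; exact Subgroup.one_mem H
  have p12 : b 1 * b 2 ∈ H := mk_pair 1 2 inv1 g1 g2
  have p34 : b 3 * b 4 ∈ H := mk_pair 3 4 inv3 g3 g4
  have p23 : b 2 * b 3 ∈ H := mk_pair 2 3 inv2 g2 g3
  have p40 : b 4 * b 0 ∈ H := mk_pair 4 0 inv4 g4 g0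
  -- b0 ∈ H
  have hb0 : b 0 ∈ H := by
    have hP : (b 1 * b 2) * (b 3 * b 4) * (b 0 * b 1) * (b 2 * b 3) * (b 4 * b 0) *
        (b 1 * b 2) * (b 3 * b 4) ∈ H := by
      exact Subgroup.mul_mem H (Subgroup.mul_mem H (Subgroup.mul_mem H (Subgroup.mul_mem H
        (Subgroup.mul_mem H (Subgroup.mul_mem H p12 p34) g1) p23) p40) p12) p34
    have heq : b 0 * ((b 1 * b 2) * (b 3 * b 4) * (b 0 * b 1) * (b 2 * b 3) * (b 4 * b 0) *
        (b 1 * b 2) * (b 3 * b 4)) = 1 := by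
      calc b 0 * ((b 1 * b 2) * (b 3 * b 4) * (b 0 * b 1) * (b 2 * b 3) * (b 4 * b 0) *
            (b 1 * b 2) * (b 3 * b 4))
          = (b 0 * b 1 * b 2 * b 3 * b 4) * (b 0 * b 1 * b 2 * b 3 * b 4) *
            (b 0 * b 1 * b 2 * b 3 * b 4) := by group
        _ = 1 := c3
    have hbeq : b 0 = ((b 1 * b 2) * (b 3 * b 4) * (b 0 * b 1) * (b 2 * b 3) * (b 4 * b 0) *
        (b 1 * b 2) * (b 3 * b 4))⁻¹ := by
      rw [eq_inv_iff_mul_eq_one]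
      exact heq
    rw [hbeq]
    exact Subgroup.inv_mem H hP
  -- remaining generators
  have hb1 : b 1 ∈ H := by
    have : b 1 = (b 0)⁻¹ * (b 0 * b 1) := by group
    rw [this, inv0]; exact Subgroup.mul_mem H hb0 g1
  have hb2 : b 2 ∈ H := by
    have : b 2 = (b 0)⁻¹ * (b 0 * b 2) := by group
    rw [this, inv0]; exact Subgroup.mul_mem H hb0 g2
  have hb3 : b 3 ∈ H := by
    have : b 3 = (b 0)⁻¹ * (b 0 * b 3) := by group
    rw [this, inv0]; exact Subgroup.mul_mem H hb0 g3
  have hb4 : b 4 ∈ H := by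
    have : b 4 = (b 0)⁻¹ * (b 0 * b 4) := by group
    rw [this, inv0]; exact Subgroup.mul_mem H hb0 g4
  have hb5 : b 5 ∈ H := by
    rw [h5]
    exact Subgroup.inv_mem H (Subgroup.mul_mem H (Subgroup.mul_mem H (Subgroup.mul_mem H
      (Subgroup.mul_mem H hb0 hb1) hb2) hb3) hb4)
  have hgen : ∀ i : Fin 6, b i ∈ H := by
    intro i
    fin_cases i
    exacts [hb0, hb1, hb2, hb3, hb4, hb5]
  exact (Subgroup.eq_top_iff' _).mpr (fun x => PresentedGroup.generated_by _ _ hgen x)
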